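/- (Joint Gaussianity of discretised Langevin displacements.) Consider the discrete Langevin process of the context with parameters γ, k, τ > 0. Then for every N ≥ 1 the random vector (ΔX₀, …, ΔX_{N-1}) in ℝᴺ has a Gaussian law with mean zero, and its covariance matrix S satisfies S_{ij} = 2kτ(1 - φ(γτ)) when i = j and S_{ij} = kγτ²φ(γτ)²·exp(-(|i-j|-1)γτ) when i ≠ j; in particular S is a symmetric Toeplitz matrix. -/

import Mathlib

open MeasureTheory ProbabilityTheory

/-- `φ(x) = (1 - exp(-x))/x`. -/
noncomputable def phi (x : ℝ) : ℝ := (1 - Real.exp (-x)) / x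

/-- The discrete Langevin process with parameters `γ, k, τ`: an initial velocity
`U₀ ~ N(0, kγ)`, together with an i.i.d. sequence `(ε_n)` of 2-dimensional Gaussian
random vectors `ε_n = (ε_n¹, ε_n²)` with mean zero and covariance matrix `C` given by
`C₁₁ = 2kτ(1 - 2φ(γτ) + φ(2γτ))`, `C₁₂ = C₂₁ = k(γτφ(γτ))²`, `C₂₂ = 2kγ²τφ(2γτ)`
(specified via the laws of all linear functionals), the whole sequence being
independent of `U₀`. -/
structure DiscreteLangevin {Ω : Type*} [MeasurableSpace Ω] (P : Measure Ω)
    (γ k τ : ℝ) where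
  U0 : Ω → ℝ
  ε : ℕ → Ω → ℝ × ℝ
  meas_U0 : Measurable U0
  meas_ε : ∀ n, Measurable (ε n)
  law_U0 : P.map U0 = gaussianReal 0 (k * γ).toNNReal
  law_ε : ∀ (n : ℕ) (a b : ℝ),
    P.map (fun ω => a * (ε n ω).1 + b * (ε n ω).2)
      = gaussianReal 0 (a ^ 2 * (2 * k * τ * (1 - 2 * phi (γ * τ) + phi (2 * γ * τ)))
          + 2 * a * b * (k * (γ * τ * phi (γ * τ)) ^ 2)
          + b ^ 2 * (2 * k * γ ^ 2 * τ * phi (2 * γ * τ))).toNNReal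
  indep_ε : iIndepFun ε P
  indep_U0 : IndepFun U0 (fun ω => fun n => ε n ω) P

/-- The velocities of the discrete Langevin process:
`U_{n+1} = exp(-γτ)·U_n + ε_n²`. -/
noncomputable def DiscreteLangevin.U {Ω : Type*} [MeasurableSpace Ω] {P : Measure Ω}
    {γ k τ : ℝ} (L : DiscreteLangevin P γ k τ) : ℕ → Ω → ℝ
  | 0 => L.U0
  | n + 1 => fun ω => Real.exp (-(γ * τ)) * L.U n ω + (L.ε n ω).2

/-- The displacements of the discrete Langevin process:
`ΔX_n = τφ(γτ)·U_n + ε_n¹`. -/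
noncomputable def DiscreteLangevin.ΔX {Ω : Type*} [MeasurableSpace Ω] {P : Measure Ω}
    {γ k τ : ℝ} (L : DiscreteLangevin P γ k τ) (n : ℕ) : Ω → ℝ :=
  fun ω => τ * phi (γ * τ) * L.U n ω + (L.ε n ω).1


set_option linter.unusedSectionVars false
set_option maxHeartbeats 1000000

namespace LangevinAux
open Real
open scoped NNReal ENNReal


lemma det_aux {x : ℝ} (hx : 0 ≤ x) :
    (1 - rexp (-x)) ^ 3 ≤ (1 + rexp (-x)) * (2 * x - 3 + 4 * rexp (-x) - rexp (-x) ^ 2) := by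
  set F : ℝ → ℝ := fun t => (1 + rexp (-t)) * (2 * t - 3 + 4 * rexp (-t) - rexp (-t) ^ 2)
    - (1 - rexp (-t)) ^ 3 with hF
  have hderiv : ∀ t : ℝ, HasDerivAt F (2 - 2 * (1 + t) * rexp (-t)) t := by
    intro t
    have he : HasDerivAt (fun s : ℝ => rexp (-s)) (-rexp (-t)) t := by
      exact ((Real.hasDerivAt_exp (-t)).comp t (hasDerivAt_neg t)).congr_deriv (by ring)
    have h1 : HasDerivAt (fun s : ℝ => 1 + rexp (-s)) (-rexp (-t)) t := by
      exact ((hasDerivAt_const t (1:ℝ)).fun_add he).congr_deriv (by ring)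
    have h2 : HasDerivAt (fun s : ℝ => 2 * s - 3 + 4 * rexp (-s) - rexp (-s) ^ 2)
        (2 + 4 * (-rexp (-t)) - 2 * rexp (-t) * (-rexp (-t))) t := by
      have ha : HasDerivAt (fun s : ℝ => 2 * s - 3) 2 t := by
        simpa using ((hasDerivAt_id t).const_mul 2).sub_const 3
      have hb : HasDerivAt (fun s : ℝ => 4 * rexp (-s)) (4 * (-rexp (-t))) t := he.const_mul 4
      have hc : HasDerivAt (fun s : ℝ => rexp (-s) ^ 2) (2 * rexp (-t) * (-rexp (-t))) t := by
        have := he.fun_pow 2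
        simpa [mul_comm, mul_assoc, mul_left_comm] using this
      exact (ha.fun_add hb).fun_sub hc
    have h3 : HasDerivAt (fun s : ℝ => (1 - rexp (-s)) ^ 3)
        (3 * (1 - rexp (-t)) ^ 2 * rexp (-t)) t := by
      have hd : HasDerivAt (fun s : ℝ => 1 - rexp (-s)) (rexp (-t)) t := by
        exact ((hasDerivAt_const t (1:ℝ)).fun_sub he).congr_deriv (by ring)
      have := hd.fun_pow 3
      simpa [mul_comm, mul_assoc, mul_left_comm] using this
    have := (h1.fun_mul h2).fun_sub h3
    exact this.congr_deriv (by ring)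
  have hmono : MonotoneOn F (Set.Ici (0:ℝ)) := by
    apply monotoneOn_of_deriv_nonneg (convex_Ici 0)
    · exact Continuous.continuousOn (by fun_prop)
    · intro t _
      exact (hderiv t).differentiableAt.differentiableWithinAt
    · intro t ht
      rw [(hderiv t).deriv]
      have h1 : (1 + t) * rexp (-t) ≤ 1 := by
        have h3 : 0 < rexp (-t) := Real.exp_pos _
        calc (1 + t) * rexp (-t) ≤ rexp t * rexp (-t) := by
              apply mul_le_mul_of_nonneg_right _ h3.le
              linarith [Real.add_one_le_exp t]
            _ = 1 := by rw [← Real.exp_add]; simp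
      linarith
  have h0 : F 0 = 0 := by norm_num [hF]
  have := hmono (Set.mem_Ici.2 le_rfl) (Set.mem_Ici.2 hx) hx
  rw [h0] at this
  simp only [hF] at this
  linarith


variable {m₁ m₂ : ℝ} {v₁ v₂ : ℝ≥0}

lemma exponent_id (hv₁ : v₁ ≠ 0) (hv₂ : v₂ ≠ 0) (y x : ℝ) :
    - (x - m₁) ^ 2 / (2 * (v₁:ℝ)) + - ((y - x) - m₂) ^ 2 / (2 * (v₂:ℝ))
      = - (y - (m₁ + m₂)) ^ 2 / (2 * ((v₁:ℝ) + (v₂:ℝ)))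
        + (-(((v₁:ℝ) + (v₂:ℝ)) / (2 * (v₁:ℝ) * (v₂:ℝ)))
            * (x - (m₁ * (v₂:ℝ) + (y - m₂) * (v₁:ℝ)) / ((v₁:ℝ) + (v₂:ℝ))) ^ 2) := by
  have h1 : (v₁:ℝ) ≠ 0 := by exact_mod_cast hv₁
  have h2 : (v₂:ℝ) ≠ 0 := by exact_mod_cast hv₂
  have h1' : (0:ℝ) < v₁ := lt_of_le_of_ne v₁.coe_nonneg (Ne.symm h1)
  have h2' : (0:ℝ) < v₂ := lt_of_le_of_ne v₂.coe_nonneg (Ne.symm h2)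
  have h3 : (v₁:ℝ) + (v₂:ℝ) ≠ 0 := by positivity
  field_simp
  ring

lemma pdf_conv_pt (hv₁ : v₁ ≠ 0) (hv₂ : v₂ ≠ 0) (y x : ℝ) :
    gaussianPDFReal m₁ v₁ x * gaussianPDFReal m₂ v₂ (y - x)
      = ((√(2 * π * v₁))⁻¹ * (√(2 * π * v₂))⁻¹
          * rexp (- (y - (m₁ + m₂)) ^ 2 / (2 * ((v₁:ℝ) + (v₂:ℝ)))))
        * rexp (-(((v₁:ℝ) + (v₂:ℝ)) / (2 * (v₁:ℝ) * (v₂:ℝ)))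
            * (x - (m₁ * (v₂:ℝ) + (y - m₂) * (v₁:ℝ)) / ((v₁:ℝ) + (v₂:ℝ))) ^ 2) := by
  simp only [gaussianPDFReal]
  rw [show ((√(2 * π * v₁))⁻¹ * rexp (- (x - m₁) ^ 2 / (2 * v₁)))
      * ((√(2 * π * v₂))⁻¹ * rexp (- ((y - x) - m₂) ^ 2 / (2 * v₂)))
      = (√(2 * π * v₁))⁻¹ * (√(2 * π * v₂))⁻¹
        * rexp (- (x - m₁) ^ 2 / (2 * (v₁:ℝ)) + - ((y - x) - m₂) ^ 2 / (2 * (v₂:ℝ))) by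
    rw [Real.exp_add]; ring]
  rw [exponent_id hv₁ hv₂, Real.exp_add]
  ring


lemma integral_exp_shift (b d : ℝ) : ∫ x, rexp (-b * (x - d) ^ 2) = √(π / b) := by
  rw [show (fun x => rexp (-b * (x - d) ^ 2))
      = fun x => (fun u => rexp (-b * u ^ 2)) (x - d) from rfl,
    integral_sub_right_eq_self (fun u => rexp (-b * u ^ 2)) d, integral_gaussian b]

lemma pdf_conv_integrable (hv₁ : v₁ ≠ 0) (hv₂ : v₂ ≠ 0) (y : ℝ) :
    Integrable (fun x => gaussianPDFReal m₁ v₁ x * gaussianPDFReal m₂ v₂ (y - x)) := by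
  have h1' : (0:ℝ) < v₁ := lt_of_le_of_ne v₁.coe_nonneg (by exact_mod_cast (Ne.symm hv₁))
  have h2' : (0:ℝ) < v₂ := lt_of_le_of_ne v₂.coe_nonneg (by exact_mod_cast (Ne.symm hv₂))
  have ha : (0:ℝ) < ((v₁:ℝ) + (v₂:ℝ)) / (2 * (v₁:ℝ) * (v₂:ℝ)) := by positivity
  rw [funext (pdf_conv_pt hv₁ hv₂ y)]
  exact ((integrable_exp_neg_mul_sq ha).comp_sub_right _).const_mul _

lemma pdf_conv (hv₁ : v₁ ≠ 0) (hv₂ : v₂ ≠ 0) (y : ℝ) :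
    ∫ x, gaussianPDFReal m₁ v₁ x * gaussianPDFReal m₂ v₂ (y - x)
      = gaussianPDFReal (m₁ + m₂) (v₁ + v₂) y := by
  have h1' : (0:ℝ) < v₁ := lt_of_le_of_ne v₁.coe_nonneg (by exact_mod_cast (Ne.symm hv₁))
  have h2' : (0:ℝ) < v₂ := lt_of_le_of_ne v₂.coe_nonneg (by exact_mod_cast (Ne.symm hv₂))
  have ha : (0:ℝ) < ((v₁:ℝ) + (v₂:ℝ)) / (2 * (v₁:ℝ) * (v₂:ℝ)) := by positivity
  rw [funext (pdf_conv_pt hv₁ hv₂ y), integral_const_mul, integral_exp_shift]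
  have hnorm : (√(2 * π * v₁))⁻¹ * (√(2 * π * v₂))⁻¹ * √(π / (((v₁:ℝ) + (v₂:ℝ)) / (2 * (v₁:ℝ) * (v₂:ℝ)))) = (√(2 * π * ((v₁:ℝ) + (v₂:ℝ))))⁻¹ := by
    have hA : (0:ℝ) < √(2 * π * v₁) := Real.sqrt_pos.2 (by positivity)
    have hB : (0:ℝ) < √(2 * π * v₂) := Real.sqrt_pos.2 (by positivity)
    have hC : (0:ℝ) < √(2 * π * ((v₁:ℝ) + (v₂:ℝ))) := Real.sqrt_pos.2 (by positivity)
    have key : √(π / (((v₁:ℝ) + (v₂:ℝ)) / (2 * (v₁:ℝ) * (v₂:ℝ)))) * √(2 * π * ((v₁:ℝ) + (v₂:ℝ))) = √(2 * π * v₁) * √(2 * π * v₂) := by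
      rw [← Real.sqrt_mul (by positivity), ← Real.sqrt_mul (by positivity)]
      congr 1
      field_simp
    field_simp
    rw [show π / (((v₁:ℝ) + (v₂:ℝ)) / (2 * (v₁:ℝ) * (v₂:ℝ))) = 2 * π * (v₁:ℝ) * (v₂:ℝ) / ((v₁:ℝ) + (v₂:ℝ)) by rw [div_div_eq_mul_div]; ring] at key
    linarith [key]
  have hcast : ((v₁ + v₂ : ℝ≥0) : ℝ) = (v₁:ℝ) + (v₂:ℝ) := by push_cast; ring
  rw [gaussianPDFReal, hcast]
  rw [← hnorm]
  ring




lemma gaussianPDF_shift (x y : ℝ) : gaussianPDF (m₂ + x) v₂ y = gaussianPDF m₂ v₂ (y - x) := by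
  unfold gaussianPDF gaussianPDFReal
  congr 3
  ring

lemma lintegral_pdf_conv (hv₁ : v₁ ≠ 0) (hv₂ : v₂ ≠ 0) (y : ℝ) :
    ∫⁻ x, gaussianPDF m₁ v₁ x * gaussianPDF m₂ v₂ (y - x)
      = gaussianPDF (m₁ + m₂) (v₁ + v₂) y := by
  have hpt : ∀ x, gaussianPDF m₁ v₁ x * gaussianPDF m₂ v₂ (y - x)
      = ENNReal.ofReal (gaussianPDFReal m₁ v₁ x * gaussianPDFReal m₂ v₂ (y - x)) := by
    intro x
    rw [gaussianPDF, gaussianPDF, ← ENNReal.ofReal_mul (gaussianPDFReal_nonneg _ _ _)]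
  simp_rw [hpt]
  rw [← ofReal_integral_eq_lintegral_ofReal (pdf_conv_integrable hv₁ hv₂ y)
    (Filter.Eventually.of_forall fun x =>
      mul_nonneg (gaussianPDFReal_nonneg _ _ _) (gaussianPDFReal_nonneg _ _ _))]
  rw [pdf_conv hv₁ hv₂ y]
  rfl

lemma prod_map_add (hv₁ : v₁ ≠ 0) (hv₂ : v₂ ≠ 0) :
    ((gaussianReal m₁ v₁).prod (gaussianReal m₂ v₂)).map (fun p : ℝ × ℝ => p.1 + p.2)
      = gaussianReal (m₁ + m₂) (v₁ + v₂) := by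
  have hsum : v₁ + v₂ ≠ 0 := by
    simp only [ne_eq, add_eq_zero]
    tauto
  ext s hs
  rw [Measure.map_apply measurable_add hs, Measure.prod_apply (measurable_add hs)]
  have h1 : ∀ x : ℝ, (gaussianReal m₂ v₂) (Prod.mk x ⁻¹' ((fun p : ℝ × ℝ => p.1 + p.2) ⁻¹' s))
      = ∫⁻ y in s, gaussianPDF m₂ v₂ (y - x) := by
    intro x
    have : Prod.mk x ⁻¹' ((fun p : ℝ × ℝ => p.1 + p.2) ⁻¹' s) = (fun y => x + y) ⁻¹' s := rfl
    rw [this, ← Measure.map_apply (measurable_const_add x) hs, gaussianReal_map_const_add,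
      gaussianReal_apply _ hv₂ s]
    exact lintegral_congr fun y => gaussianPDF_shift x y
  simp_rw [h1]
  rw [gaussianReal_of_var_ne_zero m₁ hv₁]
  rw [lintegral_withDensity_eq_lintegral_mul _ (measurable_gaussianPDF m₁ v₁)
    (by
      apply Measurable.lintegral_prod_right (f := fun (x y : ℝ) => gaussianPDF m₂ v₂ (y - x))
      exact (measurable_gaussianPDF m₂ v₂).comp (measurable_snd.sub measurable_fst))]
  simp only [Pi.mul_apply]
  have h2 : ∀ x, gaussianPDF m₁ v₁ x * ∫⁻ y in s, gaussianPDF m₂ v₂ (y - x)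
      = ∫⁻ y in s, gaussianPDF m₁ v₁ x * gaussianPDF m₂ v₂ (y - x) := fun x =>
    (lintegral_const_mul _ ((measurable_gaussianPDF m₂ v₂).comp (measurable_id.sub measurable_const))).symm
  simp_rw [h2]
  rw [lintegral_lintegral_swap
    (((measurable_gaussianPDF m₁ v₁).comp measurable_fst).mul
      ((measurable_gaussianPDF m₂ v₂).comp (measurable_snd.sub measurable_fst))).aemeasurable]
  rw [gaussianReal_apply _ hsum s]
  exact setLIntegral_congr_fun hs (fun y _ => lintegral_pdf_conv hv₁ hv₂ y)


variable {Ω : Type*} [MeasurableSpace Ω] {P : Measure Ω} [IsProbabilityMeasure P]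


lemma ae_eq_of_map_dirac {X : Ω → ℝ} (hX : Measurable X) (m : ℝ)
    (h : P.map X = Measure.dirac m) : X =ᵐ[P] fun _ => m := by
  have : P (X ⁻¹' ({m}ᶜ)) = 0 := by
    rw [← Measure.map_apply hX (measurableSet_singleton m).compl, h,
      Measure.dirac_apply' _ (measurableSet_singleton m).compl]
    simp
  rw [Filter.EventuallyEq, ae_iff]
  convert this using 2
  rfl

lemma indepFun_gaussian_add {X Y : Ω → ℝ} (hXY : IndepFun X Y P)
    (hX : Measurable X) (hY : Measurable Y)
    (hlX : P.map X = gaussianReal m₁ v₁) (hlY : P.map Y = gaussianReal m₂ v₂) :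
    P.map (fun ω => X ω + Y ω) = gaussianReal (m₁ + m₂) (v₁ + v₂) := by
  by_cases hv₁ : v₁ = 0
  · subst hv₁
    rw [gaussianReal_zero_var] at hlX
    have hae := ae_eq_of_map_dirac hX m₁ hlX
    have : (fun ω => X ω + Y ω) =ᵐ[P] fun ω => m₁ + Y ω := by
      filter_upwards [hae] with ω hω
      rw [hω]
    rw [Measure.map_congr this,
      show (fun ω => m₁ + Y ω) = (fun y => m₁ + y) ∘ Y from rfl,
      ← Measure.map_map (measurable_const_add m₁) hY, hlY, gaussianReal_map_const_add]
    rw [add_comm m₂ m₁, zero_add]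
  by_cases hv₂ : v₂ = 0
  · subst hv₂
    rw [gaussianReal_zero_var] at hlY
    have hae := ae_eq_of_map_dirac hY m₂ hlY
    have : (fun ω => X ω + Y ω) =ᵐ[P] fun ω => X ω + m₂ := by
      filter_upwards [hae] with ω hω
      rw [hω]
    rw [Measure.map_congr this,
      show (fun ω => X ω + m₂) = (fun y => y + m₂) ∘ X from rfl,
      ← Measure.map_map (measurable_add_const m₂) hX, hlX, gaussianReal_map_add_const]
    rw [add_zero]
  · have hpair : P.map (fun ω => (X ω, Y ω)) = (P.map X).prod (P.map Y) :=
      (indepFun_iff_map_prod_eq_prod_map_map hX.aemeasurable hY.aemeasurable).mp hXY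
    rw [show (fun ω => X ω + Y ω) = (fun p : ℝ × ℝ => p.1 + p.2) ∘ (fun ω => (X ω, Y ω)) from rfl,
      ← Measure.map_map measurable_add (hX.prodMk hY), hpair, hlX, hlY,
      prod_map_add hv₁ hv₂]



variable {γ k τ : ℝ}

section Scalars
variable (hγ : 0 < γ) (hk : 0 < k) (hτ : 0 < τ)
include hγ hτ

lemma hphi1 : phi (γ * τ) = (1 - rexp (-(γ * τ))) / (γ * τ) := rfl

lemma hphi2 : phi (2 * γ * τ) = (1 - rexp (-(γ * τ)) ^ 2) / (2 * γ * τ) := by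
  rw [phi]
  congr 2
  rw [sq, ← Real.exp_add]
  congr 1
  ring

lemma hC22r : 2 * k * γ ^ 2 * τ * phi (2 * γ * τ) = k * γ * (1 - rexp (-(γ * τ)) ^ 2) := by
  rw [hphi2 hγ hτ]
  have hx : γ * τ ≠ 0 := by positivity
  field_simp

lemma hC12r : k * (γ * τ * phi (γ * τ)) ^ 2 = k * (1 - rexp (-(γ * τ))) ^ 2 := by
  rw [hphi1 hγ hτ]
  have hx : γ * τ ≠ 0 := by positivity
  field_simp

lemma hC11r : 2 * k * τ * (1 - 2 * phi (γ * τ) + phi (2 * γ * τ))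
    = k / γ * (2 * (γ * τ) - 3 + 4 * rexp (-(γ * τ)) - rexp (-(γ * τ)) ^ 2) := by
  rw [hphi1 hγ hτ, hphi2 hγ hτ]
  have hx : γ * τ ≠ 0 := by positivity
  have hγ' : γ ≠ 0 := ne_of_gt hγ
  field_simp
  ring

lemma h_id1 : k * γ * (τ * phi (γ * τ)) ^ 2
      + 2 * k * τ * (1 - 2 * phi (γ * τ) + phi (2 * γ * τ))
    = 2 * k * τ * (1 - phi (γ * τ)) := by
  rw [hphi1 hγ hτ, hphi2 hγ hτ]
  have hx : γ * τ ≠ 0 := by positivity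
  field_simp
  ring

lemma h_id2 : k * γ * (τ * phi (γ * τ)) * rexp (-(γ * τ)) + k * (γ * τ * phi (γ * τ)) ^ 2
    = k * (1 - rexp (-(γ * τ))) := by
  rw [hphi1 hγ hτ]
  have hx : γ * τ ≠ 0 := by positivity
  field_simp
  ring

lemma h_id3 : k * γ * rexp (-(γ * τ)) ^ 2 + 2 * k * γ ^ 2 * τ * phi (2 * γ * τ) = k * γ := by
  rw [hphi2 hγ hτ]
  have hx : γ * τ ≠ 0 := by positivity
  field_simp
  ring

lemma h_id4 : k * (1 - rexp (-(γ * τ))) = k * γ * (τ * phi (γ * τ)) := by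
  rw [hphi1 hγ hτ]
  have hx : γ * τ ≠ 0 := by positivity
  field_simp

include hk

lemma hdet : (k * (γ * τ * phi (γ * τ)) ^ 2) ^ 2
    ≤ (2 * k * τ * (1 - 2 * phi (γ * τ) + phi (2 * γ * τ))) * (2 * k * γ ^ 2 * τ * phi (2 * γ * τ)) := by
  rw [hC12r hγ hτ, hC11r hγ hτ, hC22r hγ hτ]
  set r := rexp (-(γ * τ)) with hr
  have hx : (0:ℝ) ≤ γ * τ := by positivity
  have hH := det_aux hx
  have hr1 : r ≤ 1 := by
    rw [hr]
    exact Real.exp_le_one_iff.2 (by linarith [mul_pos hγ hτ] : -(γ * τ) ≤ 0)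
  have key : 0 ≤ k ^ 2 * ((1 - r) * ((1 + r) * (2 * (γ * τ) - 3 + 4 * r - r ^ 2) - (1 - r) ^ 3)) := by
    apply mul_nonneg (by positivity)
    apply mul_nonneg (by linarith)
    linarith
  have hγ' : γ ≠ 0 := ne_of_gt hγ
  have expand : (k / γ * (2 * (γ * τ) - 3 + 4 * r - r ^ 2)) * (k * γ * (1 - r ^ 2))
      - (k * (1 - r) ^ 2) ^ 2
      = k ^ 2 * ((1 - r) * ((1 + r) * (2 * (γ * τ) - 3 + 4 * r - r ^ 2) - (1 - r) ^ 3)) := by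
    field_simp
    ring
  linarith

lemma hC22pos : 0 < 2 * k * γ ^ 2 * τ * phi (2 * γ * τ) := by
  rw [hC22r hγ hτ]
  have hr1 : rexp (-(γ * τ)) < 1 := Real.exp_lt_one_iff.2 (by nlinarith)
  have hr0 : 0 < rexp (-(γ * τ)) := Real.exp_pos _
  have h2 : 0 < 1 - rexp (-(γ * τ)) ^ 2 := by nlinarith
  have := mul_pos (mul_pos hk hγ) h2
  nlinarith

lemma hQ_nonneg (p q : ℝ) :
    0 ≤ p ^ 2 * (2 * k * τ * (1 - 2 * phi (γ * τ) + phi (2 * γ * τ)))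
      + 2 * p * q * (k * (γ * τ * phi (γ * τ)) ^ 2)
      + q ^ 2 * (2 * k * γ ^ 2 * τ * phi (2 * γ * τ)) := by
  set A := 2 * k * τ * (1 - 2 * phi (γ * τ) + phi (2 * γ * τ))
  set B := k * (γ * τ * phi (γ * τ)) ^ 2
  set C := 2 * k * γ ^ 2 * τ * phi (2 * γ * τ)
  have h1 : B ^ 2 ≤ A * C := hdet hγ hk hτ
  have h2 : 0 < C := hC22pos hγ hk hτ
  nlinarith [sq_nonneg (B * p + C * q), mul_nonneg (sub_nonneg.2 h1) (sq_nonneg p)]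

end Scalars


variable {γ k τ : ℝ} (L : DiscreteLangevin P γ k τ)

lemma meas_U : ∀ n, Measurable (L.U n)
  | 0 => L.meas_U0
  | (n + 1) => (Measurable.const_mul (meas_U n) _).add (measurable_snd.comp (L.meas_ε n))

lemma meas_ΔX (n : ℕ) : Measurable (L.ΔX n) :=
  (Measurable.const_mul (meas_U L n) _).add (measurable_fst.comp (L.meas_ε n))

/-- The combined family: index `0` is `U₀` (paired with junk `0`), index `n+1` is `ε n`. -/
def Zfam : ℕ → Ω → ℝ × ℝ
  | 0 => fun ω => (L.U0 ω, 0)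
  | (n + 1) => L.ε n

lemma meas_Zfam : ∀ n, Measurable (Zfam L n)
  | 0 => L.meas_U0.prodMk measurable_const
  | (n + 1) => L.meas_ε n

lemma eps_part (T : Finset ℕ) (h0 : 0 ∉ T) (sets : ℕ → Set (ℝ × ℝ))
    (hsets : ∀ i ∈ T, MeasurableSet (sets i)) :
    P (⋂ i ∈ T, Zfam L i ⁻¹' sets i) = ∏ i ∈ T, P (Zfam L i ⁻¹' sets i) := by
  have hinj : Set.InjOn Nat.pred (T : Set ℕ) := by
    intro i hi j hj hij
    have hi0 : i ≠ 0 := fun h => h0 (h ▸ hi)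
    have hj0 : j ≠ 0 := fun h => h0 (h ▸ hj)
    simp only [Nat.pred_eq_sub_one] at hij
    omega
  have h1 := L.indep_ε.measure_inter_preimage_eq_mul (T.image Nat.pred)
    (sets := fun j => sets (j + 1)) (fun j hj => by
      obtain ⟨i, hi, rfl⟩ := Finset.mem_image.mp hj
      have hi0 : i ≠ 0 := fun h => h0 (h ▸ hi)
      obtain ⟨m, rfl⟩ := Nat.exists_eq_succ_of_ne_zero hi0
      simpa using hsets _ hi)
  have hIeq : (⋂ i ∈ T, Zfam L i ⁻¹' sets i)
      = ⋂ j ∈ T.image Nat.pred, L.ε j ⁻¹' sets (j + 1) := by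
    ext ω
    simp only [Set.mem_iInter, Finset.mem_image]
    constructor
    · rintro h j ⟨i, hi, rfl⟩
      have hi0 : i ≠ 0 := fun h' => h0 (h' ▸ hi)
      obtain ⟨m, rfl⟩ := Nat.exists_eq_succ_of_ne_zero hi0
      exact h (m + 1) hi
    · intro h i hi
      have hi0 : i ≠ 0 := fun h' => h0 (h' ▸ hi)
      obtain ⟨m, rfl⟩ := Nat.exists_eq_succ_of_ne_zero hi0
      exact h m ⟨m + 1, hi, rfl⟩
  have hPeq : (∏ j ∈ T.image Nat.pred, P (L.ε j ⁻¹' sets (j + 1)))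
      = ∏ i ∈ T, P (Zfam L i ⁻¹' sets i) := by
    rw [Finset.prod_image (fun i hi j hj => hinj hi hj)]
    refine Finset.prod_congr rfl fun i hi => ?_
    have hi0 : i ≠ 0 := fun h' => h0 (h' ▸ hi)
    obtain ⟨m, rfl⟩ := Nat.exists_eq_succ_of_ne_zero hi0
    rfl
  rw [hIeq, h1, hPeq]

lemma iIndep_Zfam : iIndepFun (Zfam L) P := by
  rw [iIndepFun_iff_measure_inter_preimage_eq_mul]
  intro S sets hsets
  by_cases h0 : 0 ∈ S
  · have hS : S = insert 0 (S.erase 0) := (Finset.insert_erase h0).symm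
    rw [hS, Finset.set_biInter_insert, Finset.prod_insert (Finset.notMem_erase _ _)]
    have hE : (⋂ i ∈ S.erase 0, Zfam L i ⁻¹' sets i)
        = (fun ω => fun n => L.ε n ω) ⁻¹'
            (⋂ i ∈ S.erase 0, (fun g : ℕ → ℝ × ℝ => g (i - 1)) ⁻¹' sets i) := by
      rw [Set.preimage_iInter₂]
      refine Set.iInter₂_congr fun i hi => ?_
      have hi0 : i ≠ 0 := Finset.ne_of_mem_erase hi
      obtain ⟨m, rfl⟩ := Nat.exists_eq_succ_of_ne_zero hi0
      rfl
    have hB : (Zfam L 0 ⁻¹' sets 0) = L.U0 ⁻¹' ((fun x : ℝ => (x, (0:ℝ))) ⁻¹' sets 0) := rfl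
    have hmeasB : MeasurableSet ((fun x : ℝ => (x, (0:ℝ))) ⁻¹' sets 0) :=
      (measurable_id.prodMk measurable_const) (hsets 0 h0)
    have hmeasC : MeasurableSet (⋂ i ∈ S.erase 0, (fun g : ℕ → ℝ × ℝ => g (i - 1)) ⁻¹' sets i) :=
      MeasurableSet.biInter (Finset.countable_toSet _) fun i hi =>
        (measurable_pi_apply _) (hsets i (Finset.mem_of_mem_erase hi))
    rw [hB, hE, L.indep_U0.measure_inter_preimage_eq_mul _ _ hmeasB hmeasC, ← hE, ← hB,
      eps_part L _ (Finset.notMem_erase _ _) sets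
        (fun i hi => hsets i (Finset.mem_of_mem_erase hi))]
  · exact eps_part L S h0 sets hsets

lemma indepFun_of_comap {α α' β β' : Type*} [MeasurableSpace α] [MeasurableSpace α']
    [MeasurableSpace β] [MeasurableSpace β'] {f : Ω → α} {g : Ω → α'} {T : Ω → β} {G : Ω → β'}
    (h : IndepFun f g P)
    (hT : Measurable[MeasurableSpace.comap f inferInstance] T)
    (hG : Measurable[MeasurableSpace.comap g inferInstance] G) : IndepFun T G P := by
  rw [indepFun_iff_measure_inter_preimage_eq_mul] at h ⊢
  intro s t hs ht
  obtain ⟨s', hs', hseq⟩ := hT hs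
  obtain ⟨t', ht', hteq⟩ := hG ht
  rw [← hseq, ← hteq]
  exact h s' t' hs' ht'

lemma indep_T_G (a : ℕ → ℝ) (n : ℕ) (b p q : ℝ) :
    IndepFun (fun ω => (∑ i ∈ Finset.range n, a i * L.ΔX i ω) + b * L.U n ω)
      (fun ω => p * (L.ε n ω).1 + q * (L.ε n ω).2) P := by
  have hdisj : Disjoint (Finset.range (n + 1)) ({n + 1} : Finset ℕ) := by
    simp [Finset.disjoint_singleton_right]
  have hIF := (iIndep_Zfam L).indepFun_finset (Finset.range (n + 1)) {n + 1} hdisj (meas_Zfam L)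
  refine indepFun_of_comap hIF ?_ ?_
  · have hΦ : Measurable[MeasurableSpace.comap
        (fun ω (i : (Finset.range (n + 1) : Finset ℕ)) => Zfam L i ω) inferInstance]
        (fun ω (i : (Finset.range (n + 1) : Finset ℕ)) => Zfam L i ω) :=
      fun s hs => ⟨s, hs, rfl⟩
    have hcoord : ∀ (i : ℕ) (h : i ∈ Finset.range (n + 1)),
        Measurable[MeasurableSpace.comap
          (fun ω (i : (Finset.range (n + 1) : Finset ℕ)) => Zfam L i ω) inferInstance]
          (fun ω => Zfam L i ω) := fun i h s hs =>
      hΦ (measurable_pi_apply (⟨i, h⟩ : (Finset.range (n + 1) : Finset ℕ)) hs)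
    have hU0' : Measurable[MeasurableSpace.comap
        (fun ω (i : (Finset.range (n + 1) : Finset ℕ)) => Zfam L i ω) inferInstance] L.U0 :=
      measurable_fst.comp (hcoord 0 (Finset.mem_range.mpr (Nat.succ_pos n)))
    have hε' : ∀ i, i < n → Measurable[MeasurableSpace.comap
        (fun ω (i : (Finset.range (n + 1) : Finset ℕ)) => Zfam L i ω) inferInstance] (L.ε i) := fun i hi =>
      hcoord (i + 1) (Finset.mem_range.mpr (by omega))
    have hU' : ∀ j, j ≤ n → Measurable[MeasurableSpace.comap
        (fun ω (i : (Finset.range (n + 1) : Finset ℕ)) => Zfam L i ω) inferInstance] (L.U j) := by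
      intro j
      induction j with
      | zero => exact fun _ => hU0'
      | succ m ih =>
        intro hle
        exact (Measurable.const_mul (ih (by omega)) _).add
          (measurable_snd.comp (hε' m (by omega)))
    have hΔX' : ∀ i, i < n → Measurable[MeasurableSpace.comap
        (fun ω (i : (Finset.range (n + 1) : Finset ℕ)) => Zfam L i ω) inferInstance] (L.ΔX i) := fun i hi =>
      (Measurable.const_mul (hU' i hi.le) _).add (measurable_fst.comp (hε' i hi))
    exact (Finset.measurable_sum (Finset.range n) fun i hi =>
        Measurable.const_mul (hΔX' i (Finset.mem_range.mp hi)) (a i)).add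
      (Measurable.const_mul (hU' n le_rfl) b)
  · have hΨ : Measurable[MeasurableSpace.comap
        (fun ω (i : ({n + 1} : Finset ℕ)) => Zfam L i ω) inferInstance]
        (fun ω (i : ({n + 1} : Finset ℕ)) => Zfam L i ω) :=
      fun s hs => ⟨s, hs, rfl⟩
    have hc : Measurable[MeasurableSpace.comap
        (fun ω (i : ({n + 1} : Finset ℕ)) => Zfam L i ω) inferInstance]
        (fun ω => Zfam L (n + 1) ω) := fun s hs =>
      hΨ (measurable_pi_apply (⟨n + 1, Finset.mem_singleton_self _⟩ : ({n + 1} : Finset ℕ)) hs)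
    exact ((measurable_fst.comp hc).const_mul p).add ((measurable_snd.comp hc).const_mul q)


/-- Variance of `∑_{i<n} a i • ΔX i + b • U n`, defined recursively. -/
noncomputable def Wr (γ k τ : ℝ) (a : ℕ → ℝ) : ℕ → ℝ → ℝ
  | 0, b => b ^ 2 * (k * γ)
  | n + 1, b => Wr γ k τ a n (a n * (τ * phi (γ * τ)) + b * rexp (-(γ * τ)))
      + ((a n) ^ 2 * (2 * k * τ * (1 - 2 * phi (γ * τ) + phi (2 * γ * τ)))
          + 2 * (a n) * b * (k * (γ * τ * phi (γ * τ)) ^ 2)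
          + b ^ 2 * (2 * k * γ ^ 2 * τ * phi (2 * γ * τ)))

lemma Wr_zero (a : ℕ → ℝ) (b : ℝ) : Wr γ k τ a 0 b = b ^ 2 * (k * γ) := rfl

lemma Wr_succ (a : ℕ → ℝ) (n : ℕ) (b : ℝ) :
    Wr γ k τ a (n + 1) b
      = Wr γ k τ a n (a n * (τ * phi (γ * τ)) + b * rexp (-(γ * τ)))
        + ((a n) ^ 2 * (2 * k * τ * (1 - 2 * phi (γ * τ) + phi (2 * γ * τ)))
            + 2 * (a n) * b * (k * (γ * τ * phi (γ * τ)) ^ 2)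
            + b ^ 2 * (2 * k * γ ^ 2 * τ * phi (2 * γ * τ))) := rfl

lemma Wr_nonneg (hγ : 0 < γ) (hk : 0 < k) (hτ : 0 < τ) (a : ℕ → ℝ) :
    ∀ n b, 0 ≤ Wr γ k τ a n b := by
  intro n
  induction n with
  | zero =>
    intro b
    rw [Wr_zero]
    positivity
  | succ n ih =>
    intro b
    rw [Wr_succ]
    exact add_nonneg (ih _) (hQ_nonneg hγ hk hτ _ _)

lemma law_T (hγ : 0 < γ) (hk : 0 < k) (hτ : 0 < τ) (a : ℕ → ℝ) :
    ∀ n b, P.map (fun ω => (∑ i ∈ Finset.range n, a i * L.ΔX i ω) + b * L.U n ω)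
      = gaussianReal 0 (Wr γ k τ a n b).toNNReal := by
  intro n
  induction n with
  | zero =>
    intro b
    simp only [Finset.range_zero, Finset.sum_empty, zero_add]
    have h1 : (fun ω => b * L.U 0 ω) = (fun x : ℝ => b * x) ∘ L.U0 := rfl
    rw [h1, ← Measure.map_map (measurable_const_mul b) L.meas_U0, L.law_U0,
      gaussianReal_map_const_mul, mul_zero]
    congr 1
    rw [Wr_zero, Real.toNNReal_mul (sq_nonneg b)]
    congr 1
    apply NNReal.coe_injective
    simp [Real.coe_toNNReal', max_eq_left (sq_nonneg b)]
  | succ n ih =>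
    intro b
    have hfun : (fun ω => (∑ i ∈ Finset.range (n + 1), a i * L.ΔX i ω) + b * L.U (n + 1) ω)
        = fun ω => ((∑ i ∈ Finset.range n, a i * L.ΔX i ω)
              + (a n * (τ * phi (γ * τ)) + b * rexp (-(γ * τ))) * L.U n ω)
            + (a n * (L.ε n ω).1 + b * (L.ε n ω).2) := by
      funext ω
      simp only [Finset.sum_range_succ, DiscreteLangevin.ΔX, DiscreteLangevin.U]
      ring
    rw [hfun]
    have hTmeas : Measurable (fun ω => (∑ i ∈ Finset.range n, a i * L.ΔX i ω)
        + (a n * (τ * phi (γ * τ)) + b * rexp (-(γ * τ))) * L.U n ω) :=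
      (Finset.measurable_sum (Finset.range n) fun i _ =>
        (meas_ΔX L i).const_mul (a i)).add ((meas_U L n).const_mul _)
    have hGmeas : Measurable (fun ω => a n * (L.ε n ω).1 + b * (L.ε n ω).2) :=
      ((measurable_fst.comp (L.meas_ε n)).const_mul (a n)).add
        ((measurable_snd.comp (L.meas_ε n)).const_mul b)
    have hgauss := indepFun_gaussian_add (indep_T_G L a n _ (a n) b) hTmeas hGmeas
      (ih _) (L.law_ε n (a n) b)
    rw [hgauss, add_zero,
      ← Real.toNNReal_add (Wr_nonneg hγ hk hτ a n _) (hQ_nonneg hγ hk hτ _ _), ← Wr_succ]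

/-- The covariance function on ℕ. -/
noncomputable def Sf (γ k τ : ℝ) (i j : ℕ) : ℝ :=
  if i = j then 2 * k * τ * (1 - phi (γ * τ))
  else k * γ * (τ * phi (γ * τ)) ^ 2 * rexp (-(γ * τ)) ^ ((i - j) + (j - i) - 1)

lemma Wr_closed (hγ : 0 < γ) (hk : 0 < k) (hτ : 0 < τ) (a : ℕ → ℝ) :
    ∀ n b, Wr γ k τ a n b
      = (∑ i ∈ Finset.range n, ∑ j ∈ Finset.range n, a i * a j * Sf γ k τ i j)
        + 2 * b * (k * (1 - rexp (-(γ * τ))))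
            * (∑ i ∈ Finset.range n, a i * rexp (-(γ * τ)) ^ (n - 1 - i))
        + b ^ 2 * (k * γ) := by
  intro n
  induction n with
  | zero =>
    intro b
    rw [Wr_zero]
    simp
  | succ n ih =>
    intro b
    rw [Wr_succ, ih]
    set A := ∑ i ∈ Finset.range n, a i * rexp (-(γ * τ)) ^ (n - 1 - i) with hAdef
    have hdouble : (∑ i ∈ Finset.range (n + 1), ∑ j ∈ Finset.range (n + 1),
          a i * a j * Sf γ k τ i j)
        = (∑ i ∈ Finset.range n, ∑ j ∈ Finset.range n, a i * a j * Sf γ k τ i j)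
          + (∑ i ∈ Finset.range n, a i * a n * Sf γ k τ i n)
          + ((∑ j ∈ Finset.range n, a n * a j * Sf γ k τ n j)
              + a n * a n * Sf γ k τ n n) := by
      rw [Finset.sum_congr rfl fun i (_ : i ∈ Finset.range (n+1)) =>
          Finset.sum_range_succ (fun j => a i * a j * Sf γ k τ i j) n,
        Finset.sum_add_distrib, Finset.sum_range_succ
          (fun i => ∑ j ∈ Finset.range n, a i * a j * Sf γ k τ i j) n,
        Finset.sum_range_succ (fun i => a i * a n * Sf γ k τ i n) n]
      ring
    have hSnn : Sf γ k τ n n = 2 * k * τ * (1 - phi (γ * τ)) := if_pos rfl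
    have hcross1 : (∑ i ∈ Finset.range n, a i * a n * Sf γ k τ i n)
        = a n * (k * γ * (τ * phi (γ * τ)) ^ 2) * A := by
      rw [hAdef, Finset.mul_sum]
      refine Finset.sum_congr rfl fun i hi => ?_
      have hin : i < n := Finset.mem_range.mp hi
      rw [Sf, if_neg (by omega), show (i - n) + (n - i) - 1 = n - 1 - i by omega]
      ring
    have hcross2 : (∑ j ∈ Finset.range n, a n * a j * Sf γ k τ n j)
        = a n * (k * γ * (τ * phi (γ * τ)) ^ 2) * A := by
      rw [hAdef, Finset.mul_sum]
      refine Finset.sum_congr rfl fun j hj => ?_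
      have hjn : j < n := Finset.mem_range.mp hj
      rw [Sf, if_neg (by omega), show (n - j) + (j - n) - 1 = n - 1 - j by omega]
      ring
    have hA' : (∑ i ∈ Finset.range (n + 1), a i * rexp (-(γ * τ)) ^ (n + 1 - 1 - i))
        = rexp (-(γ * τ)) * A + a n := by
      rw [Finset.sum_range_succ]
      have h1 : ∀ i ∈ Finset.range n,
          a i * rexp (-(γ * τ)) ^ (n + 1 - 1 - i)
            = rexp (-(γ * τ)) * (a i * rexp (-(γ * τ)) ^ (n - 1 - i)) := by
        intro i hi
        have hin : i < n := Finset.mem_range.mp hi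
        rw [show n + 1 - 1 - i = (n - 1 - i) + 1 by omega, pow_succ]
        ring
      rw [Finset.sum_congr rfl h1, ← Finset.mul_sum, ← hAdef]
      simp
    rw [hdouble, hSnn, hcross1, hcross2, hA']
    have h1 := h_id1 hγ hτ (k := k)
    have h2 := h_id2 hγ hτ (k := k)
    have h3 := h_id3 hγ hτ (k := k)
    have h4 := h_id4 hγ hτ (k := k)
    linear_combination (a n ^ 2) * h1 + (2 * a n * b) * h2 + (b ^ 2) * h3
      + (2 * a n * (τ * phi (γ * τ)) * A) * h4

end LangevinAux

/-- Joint Gaussianity of discretised Langevin displacements: for every `N ≥ 1` the random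
vector `(ΔX₀, …, ΔX_{N-1})` has a mean-zero Gaussian law (every linear functional of it is
a mean-zero Gaussian) with covariance matrix `S` given by `S_ij = 2kτ(1 - φ(γτ))` when
`i = j` and `S_ij = kγτ²φ(γτ)²e^{-(|i-j|-1)γτ}` when `i ≠ j`; in particular `S` is a
symmetric Toeplitz matrix. -/
theorem langevin_displacements_joint_gaussian {Ω : Type*} [MeasurableSpace Ω]
    (P : Measure Ω) [IsProbabilityMeasure P]
    (γ k τ : ℝ) (hγ : 0 < γ) (hk : 0 < k) (hτ : 0 < τ)
    (L : DiscreteLangevin P γ k τ)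
    (N : ℕ) (hN : 1 ≤ N)
    (S : Matrix (Fin N) (Fin N) ℝ)
    (hS : ∀ i j : Fin N, S i j =
      if i = j then 2 * k * τ * (1 - phi (γ * τ))
      else k * γ * τ ^ 2 * phi (γ * τ) ^ 2
        * Real.exp (-(((((i : ℤ) - (j : ℤ)).natAbs : ℝ) - 1) * γ * τ))) :
    (∀ a : Fin N → ℝ,
      P.map (fun ω => ∑ i : Fin N, a i * L.ΔX i ω)
        = gaussianReal 0 (∑ i : Fin N, ∑ j : Fin N, a i * a j * S i j).toNNReal)
    ∧ S.IsSymm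
    ∧ ∀ i j i' j' : Fin N, (i : ℤ) - (j : ℤ) = (i' : ℤ) - (j' : ℤ) → S i j = S i' j' := by
  
  classical
  refine ⟨?_, ?_, ?_⟩
  · intro a
    set aa : ℕ → ℝ := fun i => if h : i < N then a ⟨i, h⟩ else 0 with haa
    have hfe : (fun ω => ∑ i : Fin N, a i * L.ΔX i ω)
        = fun ω => (∑ i ∈ Finset.range N, aa i * L.ΔX i ω) + (0:ℝ) * L.U N ω := by
      funext ω
      rw [zero_mul, add_zero, Finset.sum_range]
      exact Finset.sum_congr rfl fun i _ => by simp [haa]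
    rw [hfe, LangevinAux.law_T L hγ hk hτ aa N 0, LangevinAux.Wr_closed hγ hk hτ aa N 0]
    congr 2
    have hterm : ∀ i j : Fin N, LangevinAux.Sf γ k τ ↑i ↑j = S i j := by
      intro i j
      rw [hS i j]
      by_cases hij : i = j
      · subst hij
        rw [LangevinAux.Sf, if_pos rfl, if_pos rfl]
      · have hvij : (i : ℕ) ≠ (j : ℕ) := fun h => hij (Fin.ext h)
        rw [LangevinAux.Sf, if_neg hvij, if_neg hij]
        have hd : (((i : ℤ) - (j : ℤ)).natAbs) = ((i : ℕ) - (j : ℕ)) + ((j : ℕ) - (i : ℕ)) := by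
          omega
        rw [hd]
        set d := ((i : ℕ) - (j : ℕ)) + ((j : ℕ) - (i : ℕ)) with hddef
        have hd1 : 1 ≤ d := by omega
        have hcast : ((d : ℝ) - 1) = ((d - 1 : ℕ) : ℝ) := by
          rw [Nat.cast_sub hd1]
          norm_num
        rw [hcast,
          show (-((((d - 1 : ℕ) : ℝ)) * γ * τ)) = ((d - 1 : ℕ) : ℝ) * (-(γ * τ)) from by ring,
          Real.exp_nat_mul]
        ring
    calc (∑ i ∈ Finset.range N, ∑ j ∈ Finset.range N, aa i * aa j * LangevinAux.Sf γ k τ i j)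
          + 2 * 0 * (k * (1 - Real.exp (-(γ * τ))))
              * (∑ i ∈ Finset.range N, aa i * Real.exp (-(γ * τ)) ^ (N - 1 - i))
          + 0 ^ 2 * (k * γ)
        = ∑ i ∈ Finset.range N, ∑ j ∈ Finset.range N, aa i * aa j * LangevinAux.Sf γ k τ i j := by
          ring
      _ = ∑ i : Fin N, ∑ j : Fin N, a i * a j * S i j := by
          rw [Finset.sum_range]
          refine Finset.sum_congr rfl fun i _ => ?_
          rw [Finset.sum_range]
          refine Finset.sum_congr rfl fun j _ => ?_
          rw [hterm i j]
          simp [haa]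
  · show S.transpose = S
    ext i j
    rw [Matrix.transpose_apply, hS, hS]
    by_cases hij : i = j
    · subst hij
      simp
    · rw [if_neg (fun h => hij h.symm), if_neg hij]
      have : ((j : ℤ) - (i : ℤ)).natAbs = ((i : ℤ) - (j : ℤ)).natAbs := by omega
      rw [this]
  · intro i j i' j' h
    rw [hS, hS]
    by_cases hij : i = j
    · have h2 : i' = j' := by
        subst hij
        apply Fin.ext
        omega
      rw [if_pos hij, if_pos h2]
    · have h2 : i' ≠ j' := by
        intro e
        subst e
        apply hij
        apply Fin.ext
        omega
      rw [if_neg hij, if_neg h2, h]
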